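/- Let c, h > 0 and N ≥ 1. Let A_h^{FEM} be the (N+1)×(N+1) real matrix equal to (c²/h²) times the tridiagonal matrix with all diagonal entries 2 except the last diagonal entry 1, and all sub- and super-diagonal entries −1, and let K = diag(2, 2, …, 2, 1) be the (N+1)×(N+1) diagonal matrix with all diagonal entries 2 except the last entry 1. Then for each j = 1, …, N+1, the number λ_j = (2c²/h²)·sin²( (2j−1)π / (4(N+1)) ) is an eigenvalue of K⁻¹A_h^{FEM} with eigenvector u_j whose k-th component is u_{j,k} = sin( (2j−1)kπ / (2(N+1)) ), k = 1, …, N+1; these are all the eigenvalues of K⁻¹A_h^{FEM}. -/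

import Mathlib

open Matrix

/-- The matrix (c²/h²) × tridiag(−1, 2, −1) of size n, with last diagonal entry 1
instead of 2. -/
noncomputable def stiffFEM (c h : ℝ) (n : ℕ) : Matrix (Fin n) (Fin n) ℝ :=
  Matrix.of fun i j =>
    (c^2/h^2) * (if i = j then (if (i:ℕ) = n - 1 then 1 else 2)
      else if (i:ℕ)+1 = (j:ℕ) ∨ (j:ℕ)+1 = (i:ℕ) then -1 else 0)

/-- The diagonal matrix K = diag(2,…,2,1) of size n. -/
def Kdiag (n : ℕ) : Matrix (Fin n) (Fin n) ℝ :=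
  Matrix.of fun i j => if i = j then (if (i:ℕ) = n - 1 then 1 else 2) else 0

private lemma sum_ite_val {n : ℕ} (m : ℕ) (g : Fin n → ℝ) :
    ∑ x : Fin n, (if (x:ℕ) = m then g x else 0) = if hm : m < n then g ⟨m, hm⟩ else 0 := by
  split_ifs with hm
  · rw [Finset.sum_eq_single ⟨m, hm⟩]
    · simp
    · intro b _ hb
      rw [if_neg]
      intro hbm; exact hb (Fin.ext hbm)
    · simp
  · apply Finset.sum_eq_zero; intro x _
    rw [if_neg]
    intro hx; exact hm (hx ▸ x.isLt)

private lemma sum_ite_val' {n : ℕ} (m : ℕ) (g : Fin n → ℝ) :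
    ∑ x : Fin n, (if (x:ℕ)+1 = m then g x else 0)
      = if hm : m - 1 < n ∧ 1 ≤ m then g ⟨m-1, hm.1⟩ else 0 := by
  split_ifs with hm
  · rw [Finset.sum_eq_single ⟨m-1, hm.1⟩]
    · have hv : ((⟨m-1, hm.1⟩ : Fin n) : ℕ) = m - 1 := rfl
      rw [if_pos (by rw [hv]; omega)]
    · intro b _ hb
      rw [if_neg]
      intro hbm
      apply hb
      apply Fin.ext
      show (b:ℕ) = m - 1
      omega
    · simp
  · apply Finset.sum_eq_zero; intro x _
    rw [if_neg]
    intro hx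
    exact hm ⟨by omega, by omega⟩

private lemma stiff_mulVec_apply (c h : ℝ) (N : ℕ) (u : Fin (N+1) → ℝ) (i : Fin (N+1)) :
    (stiffFEM c h (N+1)).mulVec u i
      = (c^2/h^2) * ((if (i:ℕ) = N then 1 else 2) * u i
          - (if hm : (i:ℕ)+1 < N+1 then u ⟨(i:ℕ)+1, hm⟩ else 0)
          - (if 1 ≤ (i:ℕ) then u ⟨(i:ℕ)-1, lt_of_le_of_lt (Nat.sub_le _ _) i.isLt⟩ else 0)) := by
  have hpt : ∀ x : Fin (N+1), stiffFEM c h (N+1) i x * u x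
      = ((if (x:ℕ) = (i:ℕ) then (c^2/h^2) * ((if (i:ℕ) = N then 1 else 2) * u x) else 0)
         + (if (x:ℕ) = (i:ℕ)+1 then (c^2/h^2) * (-(u x)) else 0))
         + (if (x:ℕ)+1 = (i:ℕ) then (c^2/h^2) * (-(u x)) else 0) := by
    intro x
    simp only [stiffFEM, of_apply, Fin.ext_iff, Nat.add_sub_cancel]
    split_ifs <;> (first | ring1 | omega)
  show (∑ x, stiffFEM c h (N+1) i x * u x) = _
  rw [Finset.sum_congr rfl (fun x _ => hpt x), Finset.sum_add_distrib,
    Finset.sum_add_distrib, sum_ite_val, sum_ite_val, sum_ite_val']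
  rw [dif_pos i.isLt]
  simp only [Fin.eta]
  split_ifs <;> (first | ring1 | omega)

private lemma eigen_row (c h : ℝ) (hh : 0 < h) (N : ℕ) (hN : 1 ≤ N) (j : Fin (N+1)) (i : Fin (N+1)) :
      (stiffFEM c h (N+1)).mulVec
        (fun k : Fin (N+1) => Real.sin ((2*((j:ℕ):ℝ)+1) * (((k:ℕ):ℝ)+1) * Real.pi / (2*((N:ℝ)+1)))) i
      = ((2*c^2/h^2) * Real.sin ((2*((j:ℕ):ℝ)+1) * Real.pi / (4*((N:ℝ)+1)))^2)
          * ((if (i:ℕ) = N then 1 else 2)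
             * Real.sin ((2*((j:ℕ):ℝ)+1) * (((i:ℕ):ℝ)+1) * Real.pi / (2*((N:ℝ)+1)))) := by
  have hNne : ((N:ℝ)+1) ≠ 0 := by positivity
  set a : ℝ := 2*((j:ℕ):ℝ)+1 with ha
  set α : ℝ := a * Real.pi / (2*((N:ℝ)+1)) with hα
  have hu : ∀ m : ℕ, Real.sin (a * ((m:ℝ)+1) * Real.pi / (2*((N:ℝ)+1)))
      = Real.sin (((m:ℝ)+1) * α) := by
    intro m; congr 1; rw [hα]; ring
  have hβ : (2*c^2/h^2) * Real.sin (a * Real.pi / (4*((N:ℝ)+1)))^2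
      = (c^2/h^2) * (1 - Real.cos α) := by
    have h2 : α = 2 * (a * Real.pi / (4*((N:ℝ)+1))) := by rw [hα]; field_simp; ring
    rw [h2, Real.cos_two_mul]
    linear_combination (2*c^2/h^2) * Real.sin_sq_add_cos_sq (a * Real.pi / (4*((N:ℝ)+1)))
  have hcos : Real.cos (((N:ℝ)+1) * α) = 0 := by
    have harg : ((N:ℝ)+1) * α = (j:ℕ) * Real.pi + Real.pi/2 := by
      rw [hα, ha]; field_simp
    rw [harg, Real.cos_add, Real.cos_pi_div_two, Real.sin_pi_div_two, Real.sin_nat_mul_pi]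
    ring
  rw [stiff_mulVec_apply, hβ]
  by_cases hiN : (i:ℕ) = N
  · rw [dif_neg (by omega), if_pos hiN, if_pos (show 1 ≤ (i:ℕ) by omega)]
    simp only [Fin.val_mk]
    rw [hu ((i:ℕ)-1), hu (i:ℕ)]
    have hc1 : ((i:ℕ):ℝ) = (N:ℝ) := by rw [hiN]
    have hc2 : (((i:ℕ)-1:ℕ):ℝ) = (N:ℝ) - 1 := by
      rw [hiN, Nat.cast_sub hN, Nat.cast_one]
    rw [hc1, hc2]
    rw [show ((N:ℝ)-1+1)*α = ((N:ℝ)+1)*α - α by ring, Real.sin_sub, hcos]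
    ring
  · rw [dif_pos (by omega), if_neg hiN]
    by_cases hi0 : 1 ≤ (i:ℕ)
    · rw [if_pos hi0]
      simp only [Fin.val_mk]
      rw [hu ((i:ℕ)+1), hu ((i:ℕ)-1), hu (i:ℕ)]
      have hc2 : (((i:ℕ)-1:ℕ):ℝ) = ((i:ℕ):ℝ) - 1 := by
        rw [Nat.cast_sub hi0, Nat.cast_one]
      have hc3 : (((i:ℕ)+1:ℕ):ℝ) = ((i:ℕ):ℝ) + 1 := by push_cast; ring
      rw [hc2, hc3]
      rw [show (((i:ℕ):ℝ)+1+1)*α = (((i:ℕ):ℝ)+1)*α + α by ring,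
        show (((i:ℕ):ℝ)-1+1)*α = (((i:ℕ):ℝ)+1)*α - α by ring,
        Real.sin_add, Real.sin_sub]
      ring
    · rw [if_neg hi0]
      simp only [Fin.val_mk]
      rw [hu ((i:ℕ)+1), hu (i:ℕ)]
      have hi0' : (i:ℕ) = 0 := by omega
      have hc3 : (((i:ℕ)+1:ℕ):ℝ) = ((i:ℕ):ℝ) + 1 := by push_cast; ring
      rw [hc3, hi0', Nat.cast_zero]
      rw [show ((0:ℝ)+1+1)*α = 2*α by ring, Real.sin_two_mul,
        show ((0:ℝ)+1)*α = α by ring]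
      ring

private lemma Kdiag_inv (n : ℕ) :
    (Kdiag n)⁻¹ = Matrix.diagonal (fun i : Fin n => if (i:ℕ) = n - 1 then 1 else (2:ℝ)⁻¹) := by
  have hK : Kdiag n = Matrix.diagonal (fun i : Fin n => if (i:ℕ) = n - 1 then (1:ℝ) else 2) := by
    ext i j
    rcases eq_or_ne i j with rfl | hij
    · simp [Kdiag, Matrix.diagonal_apply]
    · simp [Kdiag, Matrix.diagonal_apply_ne _ hij, hij]
  rw [hK]
  apply Matrix.inv_eq_right_inv
  rw [Matrix.diagonal_mul_diagonal, ← Matrix.diagonal_one]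
  exact congrArg _ (by funext i; split_ifs <;> norm_num)

private lemma part1_eq (c h : ℝ) (hh : 0 < h) (N : ℕ) (hN : 1 ≤ N) (j : Fin (N+1)) :
    ((Kdiag (N+1))⁻¹ * stiffFEM c h (N+1)).mulVec
        (fun k : Fin (N+1) =>
          Real.sin ((2*((j:ℕ):ℝ)+1) * (((k:ℕ):ℝ)+1) * Real.pi / (2*((N:ℝ)+1))))
      = ((2*c^2/h^2) * Real.sin ((2*((j:ℕ):ℝ)+1) * Real.pi / (4*((N:ℝ)+1)))^2) •
        (fun k : Fin (N+1) =>
          Real.sin ((2*((j:ℕ):ℝ)+1) * (((k:ℕ):ℝ)+1) * Real.pi / (2*((N:ℝ)+1)))) := by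
  rw [← Matrix.mulVec_mulVec, Kdiag_inv]
  funext i
  rw [Matrix.mulVec_diagonal, eigen_row c h hh N hN j i]
  simp only [Pi.smul_apply, smul_eq_mul, Nat.add_sub_cancel]
  split_ifs <;> ring

private lemma u_ne (N : ℕ) (j : Fin (N+1)) :
    (fun k : Fin (N+1) =>
      Real.sin ((2*((j:ℕ):ℝ)+1) * (((k:ℕ):ℝ)+1) * Real.pi / (2*((N:ℝ)+1)))) ≠ 0 := by
  intro h0
  have h1 := congrFun h0 ⟨0, Nat.succ_pos N⟩
  simp only [Pi.zero_apply, Fin.val_mk, Nat.cast_zero] at h1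
  apply absurd h1
  apply ne_of_gt
  apply Real.sin_pos_of_pos_of_lt_pi
  · positivity
  · have hj : ((j:ℕ):ℝ) ≤ (N:ℝ) := by exact_mod_cast Nat.le_of_lt_succ j.isLt
    rw [div_lt_iff₀ (by positivity)]
    nlinarith [Real.pi_pos]

private lemma lam_inj (c h : ℝ) (hc : 0 < c) (hh : 0 < h) (N : ℕ) :
    Function.Injective (fun j : Fin (N+1) =>
      (2*c^2/h^2) * Real.sin ((2*((j:ℕ):ℝ)+1) * Real.pi / (4*((N:ℝ)+1)))^2) := by
  have hfac : (0:ℝ) < 2*c^2/h^2 := by positivity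
  have hθ : ∀ j : Fin (N+1), 0 < (2*((j:ℕ):ℝ)+1) * Real.pi / (4*((N:ℝ)+1)) ∧
      (2*((j:ℕ):ℝ)+1) * Real.pi / (4*((N:ℝ)+1)) < Real.pi/2 := by
    intro j
    have hj : ((j:ℕ):ℝ) ≤ (N:ℝ) := by exact_mod_cast Nat.le_of_lt_succ j.isLt
    constructor
    · positivity
    · rw [div_lt_div_iff₀ (by positivity) (by norm_num)]
      nlinarith [Real.pi_pos]
  intro j j' hjj
  set θ := (2*((j:ℕ):ℝ)+1) * Real.pi / (4*((N:ℝ)+1)) with hθdef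
  set θ' := (2*((j':ℕ):ℝ)+1) * Real.pi / (4*((N:ℝ)+1)) with hθ'def
  have hsq : Real.sin θ ^ 2 = Real.sin θ' ^ 2 := mul_left_cancel₀ (ne_of_gt hfac) hjj
  have hs : 0 < Real.sin θ := Real.sin_pos_of_pos_of_lt_pi (hθ j).1
    (lt_trans (hθ j).2 (by nlinarith [Real.pi_pos]))
  have hs' : 0 < Real.sin θ' := Real.sin_pos_of_pos_of_lt_pi (hθ j').1
    (lt_trans (hθ j').2 (by nlinarith [Real.pi_pos]))
  have hss : Real.sin θ = Real.sin θ' := by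
    have hz : (Real.sin θ - Real.sin θ') * (Real.sin θ + Real.sin θ') = 0 := by
      linear_combination hsq
    rcases mul_eq_zero.mp hz with hz1 | hz2
    · linarith
    · linarith
  have hmem : θ ∈ Set.Icc (-(Real.pi/2)) (Real.pi/2) :=
    ⟨by linarith [(hθ j).1, Real.pi_pos], le_of_lt (hθ j).2⟩
  have hmem' : θ' ∈ Set.Icc (-(Real.pi/2)) (Real.pi/2) :=
    ⟨by linarith [(hθ j').1, Real.pi_pos], le_of_lt (hθ j').2⟩
  have hθθ : θ = θ' := Real.injOn_sin hmem hmem' hss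
  apply Fin.ext
  have hπ := Real.pi_ne_zero
  rw [hθdef, hθ'def] at hθθ
  field_simp at hθθ
  exact_mod_cast (by linarith : ((j:ℕ):ℝ) = ((j':ℕ):ℝ))

/-- the eigen-pairs of K⁻¹A_h^{FEM}: for j = 1,…,N+1 (encoded as
j : Fin (N+1), so "j" is j.val+1), λ_j = (2c²/h²)·sin²((2j−1)π/(4(N+1))) with
eigenvector u_{j,k} = sin((2j−1)kπ/(2(N+1))), k = 1,…,N+1, and these are all
the eigenvalues of K⁻¹A_h^{FEM}. -/
theorem KinvStiff_eigenpairs (c h : ℝ) (hc : 0 < c) (hh : 0 < h) (N : ℕ) (hN : 1 ≤ N) :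
    (∀ j : Fin (N+1),
      (fun k : Fin (N+1) =>
        Real.sin ((2*((j:ℕ):ℝ)+1) * (((k:ℕ):ℝ)+1) * Real.pi / (2*((N:ℝ)+1)))) ≠ 0 ∧
      ((Kdiag (N+1))⁻¹ * stiffFEM c h (N+1)).mulVec
        (fun k : Fin (N+1) =>
          Real.sin ((2*((j:ℕ):ℝ)+1) * (((k:ℕ):ℝ)+1) * Real.pi / (2*((N:ℝ)+1))))
      = ((2*c^2/h^2) * Real.sin ((2*((j:ℕ):ℝ)+1) * Real.pi / (4*((N:ℝ)+1)))^2) •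
        (fun k : Fin (N+1) =>
          Real.sin ((2*((j:ℕ):ℝ)+1) * (((k:ℕ):ℝ)+1) * Real.pi / (2*((N:ℝ)+1))))) ∧
    (∀ μ : ℂ, (∃ w : Fin (N+1) → ℂ, w ≠ 0 ∧
        (((Kdiag (N+1))⁻¹ * stiffFEM c h (N+1)).map (fun x => (x:ℂ))).mulVec w = μ • w) →
      ∃ j : Fin (N+1),
        μ = (((2*c^2/h^2) * Real.sin ((2*((j:ℕ):ℝ)+1) * Real.pi / (4*((N:ℝ)+1)))^2 : ℝ) : ℂ)) := by
  constructor
  · intro j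
    exact ⟨u_ne N j, part1_eq c h hh N hN j⟩
  · rintro μ ⟨w, hw0, hwe⟩
    by_contra hcon
    push_neg at hcon
    set M := (Kdiag (N+1))⁻¹ * stiffFEM c h (N+1) with hM
    set Mc := M.map (fun x : ℝ => (x:ℂ)) with hMc
    set f := Mc.mulVecLin with hf
    have hmap : ∀ (vv : Fin (N+1) → ℝ) (i : Fin (N+1)),
        Mc.mulVec (fun k => ((vv k : ℝ) : ℂ)) i = ((M.mulVec vv i : ℝ) : ℂ) := by
      intro vv i
      simp only [Matrix.mulVec, dotProduct, Matrix.map_apply, hMc,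
        ← Complex.ofReal_mul]
      rw [← Complex.ofReal_sum]
    have heig : ∀ j : Fin (N+1),
        Mc.mulVec (fun k : Fin (N+1) =>
            ((Real.sin ((2*((j:ℕ):ℝ)+1) * (((k:ℕ):ℝ)+1) * Real.pi / (2*((N:ℝ)+1))) : ℝ) : ℂ))
          = ((((2*c^2/h^2) * Real.sin ((2*((j:ℕ):ℝ)+1) * Real.pi / (4*((N:ℝ)+1)))^2 : ℝ)) : ℂ) •
            (fun k : Fin (N+1) =>
              ((Real.sin ((2*((j:ℕ):ℝ)+1) * (((k:ℕ):ℝ)+1) * Real.pi / (2*((N:ℝ)+1))) : ℝ) : ℂ)) := by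
      intro j
      funext i
      rw [hmap]
      rw [congrFun (part1_eq c h hh N hN j) i]
      simp only [Pi.smul_apply, smul_eq_mul, Complex.ofReal_mul, Complex.real_smul]
    set v : Option (Fin (N+1)) → (Fin (N+1) → ℂ) := fun o => Option.elim o w
      (fun j k => ((Real.sin ((2*((j:ℕ):ℝ)+1) * (((k:ℕ):ℝ)+1) * Real.pi / (2*((N:ℝ)+1))) : ℝ) : ℂ))
      with hv
    set ev : Option (Fin (N+1)) → ℂ := fun o => Option.elim o μ
      (fun j => (((2*c^2/h^2) * Real.sin ((2*((j:ℕ):ℝ)+1) * Real.pi / (4*((N:ℝ)+1)))^2 : ℝ) : ℂ))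
      with hev
    have hinj : Function.Injective ev := by
      intro o o' hoo
      match o, o' with
      | none, none => rfl
      | none, some j => exact absurd hoo (hcon j)
      | some j, none => exact absurd hoo.symm (hcon j)
      | some j, some j' =>
        apply congrArg some
        apply lam_inj c h hc hh N
        simp only [hev, Option.elim] at hoo
        exact_mod_cast hoo
    have heigv : ∀ o, Module.End.HasEigenvector f (ev o) (v o) := by
      intro o
      rw [Module.End.hasEigenvector_iff]
      constructor
      · rw [Module.End.mem_eigenspace_iff]
        match o with
        | none =>
          simp only [hf, Matrix.mulVecLin_apply, hv, hev, Option.elim]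
          exact hwe
        | some j =>
          simp only [hf, Matrix.mulVecLin_apply, hv, hev, Option.elim]
          exact heig j
      · match o with
        | none => exact hw0
        | some j =>
          intro h0
          apply u_ne N j
          funext k
          have hk := congrFun h0 k
          simp only [hv, Option.elim, Pi.zero_apply] at hk
          exact Complex.ofReal_eq_zero.mp hk
    have hli := Module.End.eigenvectors_linearIndependent' f ev hinj v heigv
    have hcard := hli.fintype_card_le_finrank
    rw [Module.finrank_fin_fun ℂ] at hcard
    simp only [Fintype.card_option, Fintype.card_fin] at hcard
    omega
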